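/- Let p ≥ 1, n ≥ 1, and let z₁,…,zₙ be i.i.d. standard Gaussian vectors in ℝᵖ with xᵢ = zᵢ/‖zᵢ‖. Then for every t ≥ 0, with probability at least 1 − 2·exp(−n t²/(2(1 + 1.7 t))), it holds simultaneously for all symmetric p×p real matrices U that |Tr( ((p/n)∑ᵢ xᵢxᵢᵀ − I) U )| ≤ t·p·‖U‖_F. -/

import Mathlib

open MeasureTheory ProbabilityTheory Matrix

/-- The standard Gaussian measure `N(0, I_p)` on `ℝᵖ`, as the `p`-fold product of
standard normal distributions. -/
noncomputable def stdGaussian (p : ℕ) : Measure (Fin p → ℝ) :=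
  Measure.pi fun _ => gaussianReal 0 1

/-- Euclidean norm of a vector in `ℝᵖ`. -/
noncomputable def euclNorm {p : ℕ} (v : Fin p → ℝ) : ℝ := Real.sqrt (v ⬝ᵥ v)

/-- Frobenius norm of a real matrix. -/
noncomputable def frobNorm {p : ℕ} (A : Matrix (Fin p) (Fin p) ℝ) : ℝ :=
  Real.sqrt (Matrix.trace (Aᵀ * A))

/-- Spectral (L2 operator) norm of a real matrix. -/
noncomputable def specNorm {p : ℕ} (A : Matrix (Fin p) (Fin p) ℝ) : ℝ :=
  sSup {r : ℝ | ∃ v : Fin p → ℝ, euclNorm v = 1 ∧ r = euclNorm (A.mulVec v)}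

/-- Minimal eigenvalue of a symmetric real matrix (via the Rayleigh quotient). -/
noncomputable def lambdaMin {p : ℕ} (A : Matrix (Fin p) (Fin p) ℝ) : ℝ :=
  sInf {r : ℝ | ∃ v : Fin p → ℝ, euclNorm v = 1 ∧ r = v ⬝ᵥ A.mulVec v}

/-- Maximal eigenvalue of a symmetric real matrix (via the Rayleigh quotient). -/
noncomputable def lambdaMax {p : ℕ} (A : Matrix (Fin p) (Fin p) ℝ) : ℝ :=
  sSup {r : ℝ | ∃ v : Fin p → ℝ, euclNorm v = 1 ∧ r = v ⬝ᵥ A.mulVec v}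

/-- Normalization of a vector to the unit sphere: `z ↦ z / ‖z‖`. -/
noncomputable def unitize {p : ℕ} (z : Fin p → ℝ) : Fin p → ℝ := (euclNorm z)⁻¹ • z

/-- `cos φ₀ = Tr Ω / (√p ‖Ω‖_F)`: the cosine of the angle between `Ω` and the identity. -/
noncomputable def cosAngleId {p : ℕ} (Ω : Matrix (Fin p) (Fin p) ℝ) : ℝ :=
  Matrix.trace Ω / (Real.sqrt p * frobNorm Ω)



section CoshSeries
open Nat
lemma summable_coshsq {x : ℝ} (hx : 0 ≤ x) : Summable (fun n : ℕ => x ^ n / ((2 * n)! : ℝ)) := by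
  refine Summable.of_nonneg_of_le (fun n => by positivity) (fun n => ?_)
    (Real.summable_pow_div_factorial x)
  apply div_le_div_of_nonneg_left (pow_nonneg hx n) (by positivity)
  exact_mod_cast Nat.factorial_le (by omega)

lemma cosh_sqrt_eq {x : ℝ} (hx : 0 ≤ x) :
    Real.cosh (Real.sqrt x) = ∑' n : ℕ, x ^ n / ((2 * n)! : ℝ) := by
  rw [Real.cosh_eq_tsum]
  congr 1; funext n
  rw [pow_mul, Real.sq_sqrt hx]

lemma cosh_sqrt_combo {x y a b : ℝ} (hx : 0 ≤ x) (hy : 0 ≤ y) (ha : 0 ≤ a) (hb : 0 ≤ b)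
    (hab : a + b = 1) :
    Real.cosh (Real.sqrt (a * x + b * y)) ≤ a * Real.cosh (Real.sqrt x) + b * Real.cosh (Real.sqrt y) := by
  have hxy : 0 ≤ a * x + b * y := by positivity
  rw [cosh_sqrt_eq hx, cosh_sqrt_eq hy, cosh_sqrt_eq hxy, ← tsum_mul_left, ← tsum_mul_left,
    ← Summable.tsum_add ((summable_coshsq hx).mul_left a) ((summable_coshsq hy).mul_left b)]
  refine Summable.tsum_le_tsum (fun n => ?_) (summable_coshsq hxy)
    (((summable_coshsq hx).mul_left a).add ((summable_coshsq hy).mul_left b))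
  have h := (convexOn_pow n).2 (Set.mem_Ici.2 hx) (Set.mem_Ici.2 hy) ha hb hab
  simp only [smul_eq_mul] at h
  have hf : (0:ℝ) ≤ ((2*n)! : ℝ) := by positivity
  have hf' : (0:ℝ) < ((2*n)! : ℝ) := by positivity
  rw [mul_div_assoc', mul_div_assoc', ← add_div, div_le_div_iff_of_pos_right hf']
  exact h

end CoshSeries

section Step
variable {E : Type*} [NormedAddCommGroup E] [InnerProductSpace ℝ E] [CompleteSpace E]
variable {α : Type*} [MeasurableSpace α] {ν : Measure α} [IsProbabilityMeasure ν]

lemma pinelis_step (s : E) {lam b : ℝ} (hlam : 0 ≤ lam) (hb : 0 ≤ b)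
    {X : α → E} (hXm : AEStronglyMeasurable X ν) (hXmean : (∫ z, X z ∂ν) = 0)
    (hXb : ∀ z, ‖X z‖ ≤ b) :
    ∫ z, Real.cosh (lam * ‖s + X z‖) ∂ν
      ≤ Real.cosh (lam * ‖s‖) * Real.exp (lam ^ 2 * b ^ 2 / 2) := by
  set a := ‖s‖ with ha_def
  have ha0 : 0 ≤ a := norm_nonneg s
  have hcont : Continuous fun r : ℝ => Real.cosh (lam * r) :=
    Real.continuous_cosh.comp (continuous_const.mul continuous_id)
  have hAESM : AEStronglyMeasurable (fun z => Real.cosh (lam * ‖s + X z‖)) ν :=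
    hcont.comp_aestronglyMeasurable ((hXm.const_add s).norm)
  have hptb : ∀ z, Real.cosh (lam * ‖s + X z‖) ≤ Real.cosh (lam * (a + b)) := by
    intro z
    refine Real.cosh_le_cosh.2 ?_
    have h1 : ‖s + X z‖ ≤ a + b := (norm_add_le s (X z)).trans (by gcongr; exact hXb z)
    rw [abs_of_nonneg (by positivity), abs_of_nonneg (mul_nonneg hlam (by positivity))]
    exact mul_le_mul_of_nonneg_left h1 hlam
  have hInt : Integrable (fun z => Real.cosh (lam * ‖s + X z‖)) ν := by
    refine (integrable_const (Real.cosh (lam * (a + b)))).mono' hAESM (ae_of_all _ fun z => ?_)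
    rw [Real.norm_eq_abs, abs_of_pos (Real.cosh_pos _)]
    exact hptb z
  have hXint : Integrable X ν :=
    (integrable_const b).mono' hXm (ae_of_all _ fun z => hXb z)
  suffices h : ∫ z, Real.cosh (lam * ‖s + X z‖) ∂ν ≤ Real.cosh (lam * a) * Real.cosh (lam * b) by
    refine h.trans (mul_le_mul_of_nonneg_left ?_ (Real.cosh_pos _).le)
    have := Real.cosh_le_exp_half_sq (lam * b)
    calc Real.cosh (lam * b) ≤ Real.exp ((lam * b) ^ 2 / 2) := this
      _ = Real.exp (lam ^ 2 * b ^ 2 / 2) := by ring_nf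
  rcases eq_or_lt_of_le hb with hb0 | hbp
  · -- b = 0
    have hX0 : ∀ z, X z = 0 := fun z => norm_le_zero_iff.1 ((hXb z).trans hb0.ge)
    have : (fun z => Real.cosh (lam * ‖s + X z‖)) = fun _ => Real.cosh (lam * a) := by
      funext z; rw [hX0 z, add_zero]
    rw [this, integral_const, probReal_univ, one_smul, ← hb0, mul_zero,
      Real.cosh_zero, mul_one]
  rcases eq_or_lt_of_le ha0 with ha0' | hap
  · -- a = 0
    have : ∀ z, Real.cosh (lam * ‖s + X z‖) ≤ Real.cosh (lam * b) := by
      intro z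
      have hs0 : s = 0 := norm_eq_zero.1 ha0'.symm
      refine Real.cosh_le_cosh.2 ?_
      rw [abs_of_nonneg (by positivity), abs_of_nonneg (mul_nonneg hlam hb)]
      refine mul_le_mul_of_nonneg_left ?_ hlam
      rw [hs0, zero_add]; exact hXb z
    calc ∫ z, Real.cosh (lam * ‖s + X z‖) ∂ν ≤ ∫ _, Real.cosh (lam * b) ∂ν :=
          integral_mono hInt (integrable_const _) this
      _ = Real.cosh (lam * b) := by rw [integral_const, probReal_univ, one_smul]
      _ ≤ Real.cosh (lam * a) * Real.cosh (lam * b) :=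
          le_mul_of_one_le_left (Real.cosh_pos _).le (Real.one_le_cosh _)
  -- main case : 0 < a, 0 < b
  set Z : α → ℝ := fun z => inner ℝ s (X z) with hZ_def
  have hZb : ∀ z, |Z z| ≤ a * b := fun z =>
    (abs_real_inner_le_norm s (X z)).trans (mul_le_mul_of_nonneg_left (hXb z) ha0)
  have hZm : AEStronglyMeasurable Z ν := by
    have : Continuous fun v : E => (inner ℝ s v : ℝ) := continuous_const.inner continuous_id
    exact this.comp_aestronglyMeasurable hXm
  have hZint : Integrable Z ν :=
    (integrable_const (a * b)).mono' hZm (ae_of_all _ fun z => by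
      rw [Real.norm_eq_abs]; exact hZb z)
  have hZmean : (∫ z, Z z ∂ν) = 0 := by
    simp only [hZ_def]
    rw [integral_inner hXint, hXmean, inner_zero_right]
  set c1 := Real.cosh (lam * (a - b)) with hc1
  set c2 := Real.cosh (lam * (a + b)) with hc2
  set K := (c2 - c1) / (2 * (a * b)) with hK
  have hab : (0:ℝ) < a * b := mul_pos hap hbp
  have key : ∀ z, Real.cosh (lam * ‖s + X z‖) ≤ (c1 + c2) / 2 + Z z * K := by
    intro z
    set θ := (a * b - Z z) / (2 * (a * b)) with hθ
    have hθ0 : 0 ≤ θ := by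
      apply div_nonneg _ (by positivity)
      have := (abs_le.1 (hZb z)).2; linarith
    have hθ1 : 0 ≤ 1 - θ := by
      have := (abs_le.1 (hZb z)).1
      rw [hθ]; rw [sub_nonneg, div_le_one (by positivity)]; linarith
    have hnorm2 : ‖s + X z‖ ^ 2 ≤ a ^ 2 + b ^ 2 + 2 * Z z := by
      rw [norm_add_sq_real]
      have : ‖X z‖ ^ 2 ≤ b ^ 2 := by
        apply pow_le_pow_left₀ (norm_nonneg _) (hXb z)
      rw [hZ_def]; simp only []; nlinarith [this]
    have step1 : Real.cosh (lam * ‖s + X z‖)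
        = Real.cosh (Real.sqrt ((lam * ‖s + X z‖) ^ 2)) := by
      rw [Real.sqrt_sq (by positivity)]
    have step2 : Real.cosh (Real.sqrt ((lam * ‖s + X z‖) ^ 2))
        ≤ Real.cosh (Real.sqrt (θ * (lam ^ 2 * (a - b) ^ 2) + (1 - θ) * (lam ^ 2 * (a + b) ^ 2))) := by
      have harg : (lam * ‖s + X z‖) ^ 2 ≤ θ * (lam ^ 2 * (a - b) ^ 2) + (1 - θ) * (lam ^ 2 * (a + b) ^ 2) := by
        have hcombo : θ * (lam ^ 2 * (a - b) ^ 2) + (1 - θ) * (lam ^ 2 * (a + b) ^ 2)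
            = lam ^ 2 * (a ^ 2 + b ^ 2 + 2 * Z z) := by
          rw [hθ]; field_simp; ring
        rw [hcombo, mul_pow]
        exact mul_le_mul_of_nonneg_left hnorm2 (by positivity)
      refine Real.cosh_le_cosh.2 ?_
      rw [abs_of_nonneg (Real.sqrt_nonneg _), abs_of_nonneg (Real.sqrt_nonneg _)]
      exact Real.sqrt_le_sqrt harg
    have step3 : Real.cosh (Real.sqrt (θ * (lam ^ 2 * (a - b) ^ 2) + (1 - θ) * (lam ^ 2 * (a + b) ^ 2)))
        ≤ θ * c1 + (1 - θ) * c2 := by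
      have := cosh_sqrt_combo (x := lam ^ 2 * (a - b) ^ 2) (y := lam ^ 2 * (a + b) ^ 2)
        (by positivity) (by positivity) hθ0 hθ1 (by ring)
      refine this.trans ?_
      have e1 : Real.sqrt (lam ^ 2 * (a - b) ^ 2) = |lam * (a - b)| := by
        rw [show lam ^ 2 * (a - b) ^ 2 = (lam * (a - b)) ^ 2 by ring, Real.sqrt_sq_eq_abs]
      have e2 : Real.sqrt (lam ^ 2 * (a + b) ^ 2) = |lam * (a + b)| := by
        rw [show lam ^ 2 * (a + b) ^ 2 = (lam * (a + b)) ^ 2 by ring, Real.sqrt_sq_eq_abs]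
      rw [e1, e2, Real.cosh_abs, Real.cosh_abs, ← hc1, ← hc2]
    have step4 : θ * c1 + (1 - θ) * c2 = (c1 + c2) / 2 + Z z * K := by
      rw [hθ, hK]; field_simp; ring
    calc Real.cosh (lam * ‖s + X z‖) = _ := step1
      _ ≤ _ := step2
      _ ≤ _ := step3
      _ = _ := step4
  have hRHSint : Integrable (fun z => (c1 + c2) / 2 + Z z * K) ν :=
    (integrable_const ((c1 + c2) / 2)).add (hZint.mul_const K)
  calc ∫ z, Real.cosh (lam * ‖s + X z‖) ∂ν ≤ ∫ z, ((c1 + c2) / 2 + Z z * K) ∂ν :=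
        integral_mono hInt hRHSint key
    _ = (c1 + c2) / 2 + (∫ z, Z z ∂ν) * K := by
        rw [integral_add (integrable_const _) (hZint.mul_const K), integral_const,
          probReal_univ, one_smul, integral_mul_const]
    _ = (c1 + c2) / 2 := by rw [hZmean, zero_mul, add_zero]
    _ = Real.cosh (lam * a) * Real.cosh (lam * b) := by
        rw [hc1, hc2, mul_sub, mul_add, Real.cosh_sub, Real.cosh_add]; ring
end Step

section Iter
variable {E : Type*} [NormedAddCommGroup E] [InnerProductSpace ℝ E] [CompleteSpace E]
  [MeasurableSpace E] [BorelSpace E] [SecondCountableTopology E]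
variable {α : Type*} [MeasurableSpace α] {ν : Measure α} [IsProbabilityMeasure ν]

lemma pinelis_iter {lam b : ℝ} (hlam : 0 ≤ lam) (hb : 0 ≤ b)
    {Y : α → E} (hYm : Measurable Y) (hYmean : (∫ z, Y z ∂ν) = 0) (hYb : ∀ z, ‖Y z‖ ≤ b) :
    ∀ (n : ℕ) (s : E),
      (∫ ω, Real.cosh (lam * ‖s + ∑ i : Fin n, Y (ω i)‖) ∂(Measure.pi fun _ : Fin n => ν))
        ≤ Real.cosh (lam * ‖s‖) * Real.exp (n * (lam ^ 2 * b ^ 2 / 2)) := by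
  intro n
  induction n with
  | zero =>
    intro s
    simp only [Finset.univ_eq_empty, Finset.sum_empty, add_zero, Nat.cast_zero, zero_mul,
      Real.exp_zero, mul_one]
    rw [integral_const, probReal_univ, one_smul]
  | succ n ih =>
    intro s
    set c := lam ^ 2 * b ^ 2 / 2 with hc
    set μn : Measure (Fin n → α) := Measure.pi fun _ => ν with hμn
    set T := MeasurableEquiv.piFinSuccAbove (fun _ : Fin (n + 1) => α) 0 with hT
    have hmp : MeasurePreserving T (Measure.pi fun _ : Fin (n + 1) => ν) (ν.prod μn) :=
      measurePreserving_piFinSuccAbove (fun _ => ν) 0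
    set G : α × (Fin n → α) → ℝ :=
      fun x => Real.cosh (lam * ‖(s + Y x.1) + ∑ i : Fin n, Y (x.2 i)‖) with hG
    have hGm : Measurable G := by
      apply (Real.continuous_cosh.measurable).comp
      apply Measurable.const_mul
      apply Measurable.norm
      apply Measurable.add
      · exact (hYm.comp measurable_fst).const_add s
      · exact Finset.measurable_sum _ fun i _ =>
          hYm.comp ((measurable_pi_apply i).comp measurable_snd)
    have hGb : ∀ x, G x ≤ Real.cosh (lam * (‖s‖ + (n + 1) * b)) := by
      intro x
      refine Real.cosh_le_cosh.2 ?_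
      have h1 : ‖(s + Y x.1) + ∑ i : Fin n, Y (x.2 i)‖ ≤ ‖s‖ + (n + 1) * b := by
        refine (norm_add_le _ _).trans ?_
        have h2 : ‖∑ i : Fin n, Y (x.2 i)‖ ≤ n * b := by
          refine (norm_sum_le _ _).trans ?_
          calc (∑ i : Fin n, ‖Y (x.2 i)‖) ≤ ∑ _i : Fin n, b :=
                Finset.sum_le_sum fun i _ => hYb _
            _ = n * b := by simp [mul_comm]
        have h3 : ‖s + Y x.1‖ ≤ ‖s‖ + b := (norm_add_le _ _).trans (by gcongr; exact hYb _)
        push_cast; linarith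
      rw [abs_of_nonneg (by positivity), abs_of_nonneg (mul_nonneg hlam (by positivity))]
      exact mul_le_mul_of_nonneg_left h1 hlam
    have hGint : Integrable G (ν.prod μn) := by
      refine (integrable_const (Real.cosh (lam * (‖s‖ + (n + 1) * b)))).mono'
        hGm.aestronglyMeasurable (ae_of_all _ fun x => ?_)
      rw [Real.norm_eq_abs, abs_of_pos (Real.cosh_pos _)]
      exact hGb x
    have h1 : (∫ ω, Real.cosh (lam * ‖s + ∑ i : Fin (n + 1), Y (ω i)‖)
          ∂(Measure.pi fun _ : Fin (n + 1) => ν)) = ∫ x, G x ∂(ν.prod μn) := by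
      rw [← (hmp.symm T).integral_comp T.symm.measurableEmbedding
        (fun ω => Real.cosh (lam * ‖s + ∑ i : Fin (n + 1), Y (ω i)‖))]
      congr 1
      funext x
      have hTs : (T.symm x : Fin (n + 1) → α) = Fin.cons x.1 x.2 := by
        simp [hT, MeasurableEquiv.piFinSuccAbove, Fin.insertNthEquiv, Fin.insertNth_zero']
      rw [hTs, hG]
      simp only [Fin.sum_univ_succ, Fin.cons_zero, Fin.cons_succ]
      rw [← add_assoc]
    rw [h1, integral_prod _ hGint]
    have hInner : ∀ a : α, (∫ ω', G (a, ω') ∂μn) ≤ Real.cosh (lam * ‖s + Y a‖) * Real.exp (n * c) :=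
      fun a => ih (s + Y a)
    have hOuterM : AEStronglyMeasurable (fun a => Real.cosh (lam * ‖s + Y a‖)) ν :=
      ((Real.continuous_cosh.comp (continuous_const.mul continuous_id)).measurable.comp
        ((hYm.const_add s).norm)).aestronglyMeasurable
    have hOuterInt : Integrable (fun a => Real.cosh (lam * ‖s + Y a‖) * Real.exp (n * c)) ν := by
      refine (integrable_const (Real.cosh (lam * (‖s‖ + b)) * Real.exp (n * c))).mono'
        (hOuterM.mul_const _) (ae_of_all _ fun a => ?_)
      rw [Real.norm_eq_abs, abs_of_pos (by positivity)]
      refine mul_le_mul_of_nonneg_right ?_ (Real.exp_pos _).le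
      refine Real.cosh_le_cosh.2 ?_
      rw [abs_of_nonneg (by positivity), abs_of_nonneg (mul_nonneg hlam (by positivity))]
      refine mul_le_mul_of_nonneg_left ((norm_add_le _ _).trans ?_) hlam
      gcongr; exact hYb _
    calc (∫ a, ∫ ω', G (a, ω') ∂μn ∂ν)
        ≤ ∫ a, Real.cosh (lam * ‖s + Y a‖) * Real.exp (n * c) ∂ν :=
          integral_mono hGint.integral_prod_left hOuterInt hInner
      _ = (∫ a, Real.cosh (lam * ‖s + Y a‖) ∂ν) * Real.exp (n * c) := integral_mul_const _ _
      _ ≤ (Real.cosh (lam * ‖s‖) * Real.exp c) * Real.exp (n * c) := by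
          refine mul_le_mul_of_nonneg_right ?_ (Real.exp_pos _).le
          exact pinelis_step s hlam hb hYm.aestronglyMeasurable hYmean hYb
      _ = Real.cosh (lam * ‖s‖) * Real.exp ((n + 1 : ℕ) * c) := by
          rw [mul_assoc, ← Real.exp_add]
          push_cast; ring_nf
end Iter


section UnitizeBasic
variable {p : ℕ}

lemma dot_self_nonneg (v : Fin p → ℝ) : 0 ≤ v ⬝ᵥ v :=
  Finset.sum_nonneg fun i _ => mul_self_nonneg _

lemma euclNorm_nonneg (v : Fin p → ℝ) : 0 ≤ euclNorm v := Real.sqrt_nonneg _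

lemma euclNorm_sq (v : Fin p → ℝ) : euclNorm v ^ 2 = v ⬝ᵥ v :=
  Real.sq_sqrt (dot_self_nonneg v)

lemma euclNorm_eq_zero_iff {v : Fin p → ℝ} : euclNorm v = 0 ↔ v = 0 := by
  rw [euclNorm, Real.sqrt_eq_zero (dot_self_nonneg v)]
  constructor
  · intro h
    funext i
    have h2 := (Finset.sum_eq_zero_iff_of_nonneg
      (fun i _ => mul_self_nonneg (v i))).1 h i (Finset.mem_univ i)
    exact mul_self_eq_zero.1 h2
  · intro h; rw [h]; simp [dotProduct]

lemma euclNorm_pos {v : Fin p → ℝ} (hv : v ≠ 0) : 0 < euclNorm v :=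
  lt_of_le_of_ne (euclNorm_nonneg v) (fun h => hv (euclNorm_eq_zero_iff.1 h.symm))

lemma unitize_apply (z : Fin p → ℝ) (i : Fin p) : unitize z i = (euclNorm z)⁻¹ * z i := rfl

lemma abs_le_euclNorm (z : Fin p → ℝ) (i : Fin p) : |z i| ≤ euclNorm z := by
  rw [euclNorm, ← Real.sqrt_sq_eq_abs]
  apply Real.sqrt_le_sqrt
  have : z i ^ 2 = z i * z i := sq (z i) ▸ by ring
  rw [this]
  exact Finset.single_le_sum (fun j (_ : j ∈ Finset.univ) => mul_self_nonneg (z j))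
    (Finset.mem_univ i)

lemma abs_unitize_le (z : Fin p → ℝ) (i : Fin p) : |unitize z i| ≤ 1 := by
  rcases eq_or_ne z 0 with h | h
  · simp [h, unitize_apply]
  · have he := euclNorm_pos h
    rw [unitize_apply, abs_mul, abs_inv, abs_of_pos he]
    rw [inv_mul_le_iff₀ he]
    simpa using abs_le_euclNorm z i

lemma sum_sq_unitize {z : Fin p → ℝ} (hz : z ≠ 0) : (∑ i, unitize z i ^ 2) = 1 := by
  have he := euclNorm_pos hz
  have : (∑ i, unitize z i ^ 2) = (euclNorm z)⁻¹ ^ 2 * (z ⬝ᵥ z) := by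
    simp only [unitize_apply, mul_pow, dotProduct, Finset.mul_sum]
    exact Finset.sum_congr rfl fun i _ => by ring
  rw [this, ← euclNorm_sq, inv_pow, inv_mul_cancel₀ (by positivity)]

lemma sum_sq_unitize_le (z : Fin p → ℝ) : (∑ i, unitize z i ^ 2) ≤ 1 := by
  rcases eq_or_ne z 0 with h | h
  · simp [h, unitize_apply]
  · exact (sum_sq_unitize h).le

lemma measurable_euclNorm : Measurable (euclNorm : (Fin p → ℝ) → ℝ) := by
  apply Real.continuous_sqrt.measurable.comp
  apply Finset.measurable_sum
  exact fun i _ => (measurable_pi_apply i).mul (measurable_pi_apply i)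

lemma measurable_unitize (i : Fin p) : Measurable fun z : Fin p → ℝ => unitize z i := by
  simp only [unitize_apply]
  exact measurable_euclNorm.inv.mul (measurable_pi_apply i)
end UnitizeBasic

section Gauss
variable {p : ℕ}

instance stdGaussian_prob (p : ℕ) : IsProbabilityMeasure (stdGaussian p) := by
  unfold _root_.stdGaussian; infer_instance

lemma integrable_of_bdd {f : (Fin p → ℝ) → ℝ} (hm : Measurable f) (C : ℝ)
    (hC : ∀ z, |f z| ≤ C) : Integrable f (stdGaussian p) :=
  (integrable_const C).mono' hm.aestronglyMeasurable
    (ae_of_all _ fun z => by rw [Real.norm_eq_abs]; exact hC z)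

lemma integral_unitize_offdiag {i j : Fin p} (hij : i ≠ j) :
    (∫ z, unitize z i * unitize z j ∂(stdGaussian p)) = 0 := by
  set T : (Fin p → ℝ) → (Fin p → ℝ) := fun z k => (if k = i then (-1:ℝ) else 1) * z k with hT
  have hmp : MeasurePreserving T (stdGaussian p) (stdGaussian p) := by
    apply measurePreserving_pi (fun _ => gaussianReal 0 1) (fun _ => gaussianReal 0 1)
    intro k
    constructor
    · exact measurable_id.const_mul _
    · have h := gaussianReal_map_const_mul (μ := 0) (v := 1) (if k = i then (-1:ℝ) else 1)
      rw [h]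
      congr 1
      · simp
      · ext
        split <;> norm_num
  have hnorm : ∀ z, euclNorm (T z) = euclNorm z := by
    intro z
    unfold euclNorm
    congr 1
    refine Finset.sum_congr rfl fun k _ => ?_
    simp only [hT]
    split <;> ring
  have hTi : ∀ z, unitize (T z) i = -(unitize z i) := by
    intro z
    rw [unitize_apply, unitize_apply, hnorm]
    show (euclNorm z)⁻¹ * ((if i = i then (-1:ℝ) else 1) * z i) = _
    rw [if_pos rfl]; ring
  have hTj : ∀ z, unitize (T z) j = unitize z j := by
    intro z
    rw [unitize_apply, unitize_apply, hnorm]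
    show (euclNorm z)⁻¹ * ((if j = i then (-1:ℝ) else 1) * z j) = _
    rw [if_neg (fun h => hij h.symm)]; ring
  have hm : Measurable fun z : Fin p → ℝ => unitize z i * unitize z j :=
    (measurable_unitize i).mul (measurable_unitize j)
  have h1 : (∫ z, unitize z i * unitize z j ∂(stdGaussian p))
      = ∫ z, unitize (T z) i * unitize (T z) j ∂(stdGaussian p) := by
    conv_lhs => rw [← hmp.map_eq]
    rw [integral_map hmp.measurable.aemeasurable hm.aestronglyMeasurable]
  have h2 : (∫ z, unitize (T z) i * unitize (T z) j ∂(stdGaussian p))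
      = - ∫ z, unitize z i * unitize z j ∂(stdGaussian p) := by
    rw [← integral_neg]
    refine integral_congr_ae (ae_of_all _ fun z => ?_)
    show unitize (T z) i * unitize (T z) j = -(unitize z i * unitize z j)
    rw [hTi, hTj]; ring
  have := h1.trans h2
  linarith

lemma ae_ne_zero (hp : 1 ≤ p) : ∀ᵐ z ∂(stdGaussian p), z ≠ 0 := by
  rw [ae_iff]
  have : {z : Fin p → ℝ | ¬ z ≠ 0} = {(0 : Fin p → ℝ)} := by
    ext z; simp
  rw [this]
  set i0 : Fin p := ⟨0, hp⟩
  have hsub : ({(0 : Fin p → ℝ)} : Set (Fin p → ℝ))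
      ⊆ Set.pi Set.univ (fun k => if k = i0 then ({0} : Set ℝ) else Set.univ) := by
    intro z hz
    rw [Set.mem_singleton_iff] at hz
    subst hz
    intro k _
    by_cases hk : k = i0 <;> simp [hk]
  refine measure_mono_null hsub ?_
  unfold _root_.stdGaussian
  rw [Measure.pi_pi]
  refine Finset.prod_eq_zero (Finset.mem_univ i0) ?_
  rw [if_pos rfl]
  exact gaussianReal_absolutelyContinuous 0 one_ne_zero Real.volume_singleton

lemma integral_unitize_diag (hp : 1 ≤ p) (i : Fin p) :
    (∫ z, unitize z i ^ 2 ∂(stdGaussian p)) = 1 / p := by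
  -- all diagonal integrals are equal
  have hswap : ∀ j : Fin p, (∫ z, unitize z j ^ 2 ∂(stdGaussian p))
      = ∫ z, unitize z i ^ 2 ∂(stdGaussian p) := by
    intro j
    set e := Equiv.swap i j with he
    set M := MeasurableEquiv.piCongrLeft (fun _ : Fin p => ℝ) e with hM
    have hmp : MeasurePreserving M (stdGaussian p) (stdGaussian p) :=
      measurePreserving_piCongrLeft (fun _ : Fin p => gaussianReal 0 1) e
    have hMx : ∀ (x : Fin p → ℝ) (b : Fin p), M x b = x (e.symm b) := by
      intro x b
      conv_lhs => rw [← e.apply_symm_apply b]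
      rw [hM]
      exact MeasurableEquiv.piCongrLeft_apply_apply (β := fun _ : Fin p => ℝ) e x (e.symm b)
    have hnorm : ∀ x : Fin p → ℝ, euclNorm (M x) = euclNorm x := by
      intro x
      unfold euclNorm dotProduct
      congr 1
      rw [← Equiv.sum_comp e.symm (fun k => x k * x k)]
      exact Finset.sum_congr rfl fun k _ => by rw [hMx]
    have hMj : ∀ x : Fin p → ℝ, unitize (M x) i = unitize x j := by
      intro x
      rw [unitize_apply, unitize_apply, hnorm, hMx]
      congr 2
      rw [he, Equiv.symm_swap, Equiv.swap_apply_left]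
    have hm : Measurable fun z : Fin p → ℝ => unitize z i ^ 2 := (measurable_unitize i).pow_const 2
    calc (∫ z, unitize z j ^ 2 ∂(stdGaussian p))
        = ∫ x, unitize (M x) i ^ 2 ∂(stdGaussian p) := by
          refine integral_congr_ae (ae_of_all _ fun x => ?_)
          show unitize x j ^ 2 = unitize (M x) i ^ 2
          rw [hMj]
      _ = ∫ z, unitize z i ^ 2 ∂(stdGaussian p) := by
          conv_rhs => rw [← hmp.map_eq]
          rw [integral_map hmp.measurable.aemeasurable hm.aestronglyMeasurable]
  have hsum : (∑ j, ∫ z, unitize z j ^ 2 ∂(stdGaussian p)) = 1 := by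
    rw [← integral_finset_sum _ (fun j _ => integrable_of_bdd ((measurable_unitize j).pow_const 2) 1
      (fun z => by
        rw [abs_of_nonneg (sq_nonneg _), ← sq_abs]
        exact pow_le_one₀ (abs_nonneg _) (abs_unitize_le z j)))]
    rw [integral_congr_ae ((ae_ne_zero hp).mono fun z hz => sum_sq_unitize hz)]
    simp
  rw [Finset.sum_congr rfl (fun j _ => hswap j)] at hsum
  simp only [Finset.sum_const, Finset.card_univ, Fintype.card_fin, nsmul_eq_mul] at hsum
  have hp' : (0:ℝ) < p := by exact_mod_cast hp
  field_simp
  linarith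
end Gauss

section Ydef
variable {p : ℕ}

noncomputable def Ymat (p : ℕ) (z : Fin p → ℝ) : EuclideanSpace ℝ (Fin p × Fin p) :=
  WithLp.toLp 2 fun q => unitize z q.1 * unitize z q.2 - (if q.1 = q.2 then (1:ℝ)/p else 0)

lemma Ymat_apply (z : Fin p → ℝ) (q : Fin p × Fin p) :
    Ymat p z q = unitize z q.1 * unitize z q.2 - (if q.1 = q.2 then (1:ℝ)/p else 0) := rfl

lemma measurable_Ymat : Measurable (Ymat p) := by
  apply (WithLp.measurable_toLp 2 _).comp
  apply measurable_pi_lambda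
  intro q
  exact ((measurable_unitize q.1).mul (measurable_unitize q.2)).sub measurable_const

lemma sum_sq_Ymat (hp : 1 ≤ p) (z : Fin p → ℝ) :
    (∑ q : Fin p × Fin p, Ymat p z q ^ 2)
      = (∑ i, unitize z i ^ 2)^2 - 2*(∑ i, unitize z i ^ 2)*(1/(p:ℝ)) + 1/(p:ℝ) := by
  set x : Fin p → ℝ := unitize z with hx
  set S : ℝ := ∑ i, x i ^ 2 with hS
  have hpne : (p:ℝ) ≠ 0 := by positivity
  have hinner : ∀ i : Fin p, (∑ j, (x i * x j - (if i = j then (1:ℝ)/p else 0))^2)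
      = x i^2 * S + (-2*(x i)^2*(1/(p:ℝ)) + 1/(p:ℝ)^2) := by
    intro i
    have hterm : ∀ j : Fin p, (x i * x j - (if i = j then (1:ℝ)/p else 0))^2
        = x i^2 * x j^2 + (if j = i then (-2*(x i)^2*(1/(p:ℝ)) + 1/(p:ℝ)^2) else 0) := by
      intro j
      by_cases h : i = j
      · subst h; simp only [if_pos rfl, ↓reduceIte]; ring
      · rw [if_neg h, if_neg (fun hh => h hh.symm)]; ring
    rw [Finset.sum_congr rfl fun j _ => hterm j, Finset.sum_add_distrib,
      Finset.sum_ite_eq' Finset.univ i, if_pos (Finset.mem_univ i), ← Finset.mul_sum, ← hS]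
  rw [Fintype.sum_prod_type]
  simp only [Ymat_apply, ← hx]
  rw [Finset.sum_congr rfl fun i _ => hinner i, Finset.sum_add_distrib]
  have e1 : (∑ i, x i^2 * S) = S^2 := by rw [← Finset.sum_mul, ← hS, sq]
  have e2 : (∑ _i : Fin p, (-2*x _i^2*(1/(p:ℝ)) + 1/(p:ℝ)^2)) = -2*S*(1/(p:ℝ)) + 1/(p:ℝ) := by
    rw [Finset.sum_add_distrib, ← Finset.sum_mul, ← Finset.mul_sum, ← hS, Finset.sum_const,
      Finset.card_univ, Fintype.card_fin, nsmul_eq_mul]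
    congr 1
    field_simp
  rw [e1, e2]
  ring

lemma norm_Ymat_le (hp : 1 ≤ p) (z : Fin p → ℝ) : ‖Ymat p z‖ ≤ 1 := by
  have hp' : (1:ℝ) ≤ p := by exact_mod_cast hp
  have hq0 : (0:ℝ) < 1/(p:ℝ) := by positivity
  have hq1 : (1:ℝ)/(p:ℝ) ≤ 1 := by
    rw [div_le_one (by positivity)]; exact hp'
  set S : ℝ := ∑ i, unitize z i ^ 2 with hS
  have hS0 : 0 ≤ S := Finset.sum_nonneg fun i _ => sq_nonneg _
  have hS1 : S ≤ 1 := sum_sq_unitize_le z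
  rw [EuclideanSpace.norm_eq]
  rw [show (1:ℝ) = Real.sqrt 1 from (Real.sqrt_one).symm]
  apply Real.sqrt_le_sqrt
  have : (∑ q : Fin p × Fin p, ‖Ymat p z q‖ ^ 2) = ∑ q : Fin p × Fin p, Ymat p z q ^ 2 :=
    Finset.sum_congr rfl fun q _ => by rw [Real.norm_eq_abs, sq_abs]
  rw [this, sum_sq_Ymat hp z, ← hS]
  nlinarith [mul_nonneg (sub_nonneg.2 hS1) (sub_nonneg.2 hq1),
    mul_nonneg hS0 (by nlinarith : (0:ℝ) ≤ 1 - S + 1/(p:ℝ))]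

lemma integrable_Ymat (hp : 1 ≤ p) : Integrable (Ymat p) (stdGaussian p) :=
  (integrable_const 1).mono' measurable_Ymat.aestronglyMeasurable
    (ae_of_all _ fun z => norm_Ymat_le hp z)

lemma integral_Ymat (hp : 1 ≤ p) : (∫ z, Ymat p z ∂(stdGaussian p)) = 0 := by
  have hcoord : ∀ q : Fin p × Fin p, (∫ z, Ymat p z ∂(stdGaussian p)) q = 0 := by
    intro q
    have h1 : (∫ z, Ymat p z ∂(stdGaussian p)) q
        = EuclideanSpace.proj q (∫ z, Ymat p z ∂(stdGaussian p)) := rfl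
    rw [h1, ← ContinuousLinearMap.integral_comp_comm _ (integrable_Ymat hp)]
    have h2 : ∀ z, EuclideanSpace.proj q (Ymat p z)
        = unitize z q.1 * unitize z q.2 - (if q.1 = q.2 then (1:ℝ)/p else 0) := fun z => rfl
    rw [integral_congr_ae (ae_of_all _ h2)]
    have hint1 : Integrable (fun z : Fin p → ℝ => unitize z q.1 * unitize z q.2)
        (stdGaussian p) := by
      refine integrable_of_bdd ((measurable_unitize q.1).mul (measurable_unitize q.2)) 1 fun z => ?_
      rw [abs_mul]
      exact mul_le_one₀ (abs_unitize_le z q.1) (abs_nonneg _) (abs_unitize_le z q.2)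
    rw [integral_sub hint1 (integrable_const _), integral_const, probReal_univ,
      one_smul]
    rcases eq_or_ne q.1 q.2 with h | h
    · rw [if_pos h, h]
      have := integral_unitize_diag hp q.2
      rw [show (fun z : Fin p → ℝ => unitize z q.2 * unitize z q.2)
        = fun z : Fin p → ℝ => unitize z q.2 ^ 2 from funext fun z => (sq _).symm]
      rw [this]; ring
    · rw [if_neg h, integral_unitize_offdiag h, sub_zero]
  exact PiLp.ext hcoord
end Ydef


/-- For i.i.d. standard Gaussian `z₁,…,zₙ` in `ℝᵖ` and `xᵢ = zᵢ/‖zᵢ‖`,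
for every `t ≥ 0`, with probability at least `1 − 2 exp(−n t²/(2(1 + 1.7 t)))` it holds
simultaneously for all symmetric `U` that `|Tr(((p/n)∑ᵢ xᵢxᵢᵀ − I) U)| ≤ t p ‖U‖_F`. -/
theorem gradient_concentration (p n : ℕ) (hp : 1 ≤ p) (hn : 1 ≤ n) (t : ℝ) (ht : 0 ≤ t) :
    ENNReal.ofReal (1 - 2 * Real.exp (-((n : ℝ) * t ^ 2) / (2 * (1 + 1.7 * t))))
      ≤ (Measure.pi fun _ : Fin n => stdGaussian p)
        {ω | ∀ U : Matrix (Fin p) (Fin p) ℝ, U.IsSymm →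
          |Matrix.trace
            ((((p : ℝ) / n) • (∑ i : Fin n, vecMulVec (unitize (ω i)) (unitize (ω i))) - 1) * U)|
            ≤ t * p * frobNorm U} := by
  classical
  set ν := stdGaussian p with hν
  set μ : Measure (Fin n → Fin p → ℝ) := Measure.pi fun _ : Fin n => stdGaussian p with hμ
  set SY : (Fin n → Fin p → ℝ) → EuclideanSpace ℝ (Fin p × Fin p) :=
    fun ω => ∑ i : Fin n, Ymat p (ω i) with hSY
  have hSYm : Measurable fun ω => ‖SY ω‖ :=
    (Finset.measurable_sum _ fun i _ => measurable_Ymat.comp (measurable_pi_apply i)).norm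
  set B : Set (Fin n → Fin p → ℝ) := {ω | t * n < ‖SY ω‖} with hB
  have hBmeas : MeasurableSet B := measurableSet_lt measurable_const hSYm
  have hn0 : (0:ℝ) < n := by exact_mod_cast hn
  have hp0 : (0:ℝ) < p := by exact_mod_cast hp
  -- Chernoff bound on B
  have hI : (∫ ω, Real.cosh (t * ‖SY ω‖) ∂μ) ≤ Real.exp (n * (t ^ 2 / 2)) := by
    have hiter := pinelis_iter (ν := stdGaussian p) (lam := t) (b := 1) ht zero_le_one
      measurable_Ymat (integral_Ymat hp) (norm_Ymat_le hp) n 0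
    simpa using hiter
  have hSYb : ∀ ω, ‖SY ω‖ ≤ n := by
    intro ω
    refine (norm_sum_le _ _).trans ?_
    calc (∑ i : Fin n, ‖Ymat p (ω i)‖) ≤ ∑ _i : Fin n, (1:ℝ) :=
          Finset.sum_le_sum fun i _ => norm_Ymat_le hp _
      _ = n := by simp
  have hint : Integrable (fun ω => Real.cosh (t * ‖SY ω‖)) μ := by
    refine (integrable_const (Real.cosh (t * n))).mono'
      ((Real.continuous_cosh.measurable.comp (hSYm.const_mul t)).aestronglyMeasurable)
      (ae_of_all _ fun ω => ?_)
    rw [Real.norm_eq_abs, abs_of_pos (Real.cosh_pos _)]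
    refine Real.cosh_le_cosh.2 ?_
    rw [abs_of_nonneg (by positivity), abs_of_nonneg (by positivity)]
    exact mul_le_mul_of_nonneg_left (hSYb ω) ht
  set ε : ℝ := Real.cosh (t * (t * n)) with hε
  have hε1 : 1 ≤ ε := Real.one_le_cosh _
  have hε0 : 0 < ε := lt_of_lt_of_le one_pos hε1
  set C : Set (Fin n → Fin p → ℝ) := {ω | ε ≤ Real.cosh (t * ‖SY ω‖)} with hC
  have hsubC : B ⊆ C := by
    intro ω hω
    refine Real.cosh_le_cosh.2 ?_
    rw [abs_of_nonneg (by positivity), abs_of_nonneg (by positivity)]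
    exact mul_le_mul_of_nonneg_left (le_of_lt hω) ht
  have hmarkov := mul_meas_ge_le_integral_of_nonneg
    (μ := μ) (ae_of_all _ fun ω => (Real.cosh_pos (t * ‖SY ω‖)).le) hint ε
  have hεexp : Real.exp (t * (t * n)) / 2 ≤ ε := by
    rw [hε, Real.cosh_eq]
    have := (Real.exp_pos (-(t * (t * n)))).le
    linarith
  have hCbound : (μ C).toReal ≤ 2 * Real.exp (-((n:ℝ) * t ^ 2) / 2) := by
    have h1 : (μ C).toReal ≤ Real.exp (n * (t ^ 2 / 2)) / ε := by
      rw [le_div_iff₀ hε0, mul_comm]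
      exact hmarkov.trans hI
    refine h1.trans ?_
    have h2 : Real.exp (n * (t ^ 2 / 2)) / ε ≤ Real.exp (n * (t ^ 2 / 2)) / (Real.exp (t * (t * n)) / 2) := by
      apply div_le_div_of_nonneg_left (Real.exp_pos _).le ?_ hεexp
      positivity
    refine h2.trans ?_
    have he : Real.exp ((n:ℝ) * (t ^ 2 / 2)) / (Real.exp (t * (t * n)) / 2)
        = 2 * Real.exp ((n:ℝ) * (t ^ 2 / 2) - t * (t * n)) := by
      rw [Real.exp_sub]; ring
    rw [he, show (n:ℝ) * (t ^ 2 / 2) - t * (t * n) = -((n:ℝ) * t ^ 2) / 2 by ring]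
  have hμB : μ B ≤ ENNReal.ofReal (2 * Real.exp (-((n:ℝ) * t ^ 2) / 2)) := by
    refine (measure_mono hsubC).trans ?_
    have hfin : μ C ≠ ⊤ := measure_ne_top μ C
    rw [← ENNReal.ofReal_toReal hfin]
    exact ENNReal.ofReal_le_ofReal hCbound
  -- the good event contains Bᶜ
  have hsubset : Bᶜ ⊆ {ω : Fin n → Fin p → ℝ | ∀ U : Matrix (Fin p) (Fin p) ℝ, U.IsSymm →
      |Matrix.trace
        ((((p : ℝ) / n) • (∑ i : Fin n, vecMulVec (unitize (ω i)) (unitize (ω i))) - 1) * U)|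
        ≤ t * p * frobNorm U} := by
    intro ω hω U _
    have hωB : ‖SY ω‖ ≤ t * n := not_lt.1 hω
    set M : Matrix (Fin p) (Fin p) ℝ :=
      ((p : ℝ) / n) • (∑ i : Fin n, vecMulVec (unitize (ω i)) (unitize (ω i))) - 1 with hM
    have hMentry : ∀ a b : Fin p, M a b = ((p:ℝ)/n) * (SY ω) (a, b) := by
      intro a b
      have hSYab : (SY ω) (a, b) = ∑ i : Fin n, Ymat p (ω i) (a, b) := by
        simp only [hSY]
        exact map_sum (EuclideanSpace.proj ((a, b) : Fin p × Fin p))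
          (fun i => Ymat p (ω i)) Finset.univ
      rw [hM, hSYab]
      simp only [Matrix.sub_apply, Matrix.smul_apply, Matrix.sum_apply, Matrix.one_apply,
        Matrix.vecMulVec_apply, smul_eq_mul, Ymat_apply]
      rw [Finset.sum_sub_distrib]
      have hite : (∑ _x : Fin n, (if a = b then (1:ℝ)/p else 0))
          = (n:ℝ) * (if a = b then (1:ℝ)/p else 0) := by
        rw [Finset.sum_const, Finset.card_univ, Fintype.card_fin, nsmul_eq_mul]
      rw [hite, mul_sub, Finset.mul_sum]
      congr 1
      by_cases hab : a = b
      · rw [if_pos hab, if_pos hab]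
        field_simp
      · rw [if_neg hab, if_neg hab]
        simp
    have htr : Matrix.trace (M * U) = ∑ q : Fin p × Fin p, M q.1 q.2 * U q.2 q.1 := by
      rw [Fintype.sum_prod_type]
      simp only [Matrix.trace, Matrix.diag, Matrix.mul_apply]
    have hU : Real.sqrt (∑ q : Fin p × Fin p, U q.2 q.1 ^ 2) = frobNorm U := by
      rw [frobNorm]
      congr 1
      rw [Fintype.sum_prod_type]
      simp only [Matrix.trace, Matrix.diag, Matrix.mul_apply, Matrix.transpose_apply]
      exact Finset.sum_congr rfl fun a _ => Finset.sum_congr rfl fun b _ => (sq _)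
    have hMnorm : Real.sqrt (∑ q : Fin p × Fin p, M q.1 q.2 ^ 2) = ((p:ℝ)/n) * ‖SY ω‖ := by
      have : (∑ q : Fin p × Fin p, M q.1 q.2 ^ 2)
          = ((p:ℝ)/n)^2 * ∑ q : Fin p × Fin p, ((SY ω) q)^2 := by
        rw [Finset.mul_sum]
        refine Finset.sum_congr rfl fun q _ => ?_
        rw [hMentry q.1 q.2]
        ring
      rw [this, Real.sqrt_mul (by positivity), Real.sqrt_sq (by positivity)]
      congr 1
      rw [EuclideanSpace.norm_eq]
      congr 1
      exact Finset.sum_congr rfl fun q _ => by rw [Real.norm_eq_abs, sq_abs]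
    have hCS : |∑ q : Fin p × Fin p, M q.1 q.2 * U q.2 q.1|
        ≤ Real.sqrt (∑ q : Fin p × Fin p, M q.1 q.2 ^ 2)
          * Real.sqrt (∑ q : Fin p × Fin p, U q.2 q.1 ^ 2) := by
      have hpos := Real.sum_mul_le_sqrt_mul_sqrt Finset.univ
        (fun q : Fin p × Fin p => M q.1 q.2) (fun q => U q.2 q.1)
      have hneg := Real.sum_mul_le_sqrt_mul_sqrt Finset.univ
        (fun q : Fin p × Fin p => -(M q.1 q.2)) (fun q => U q.2 q.1)
      have hsq : (∑ q : Fin p × Fin p, (-(M q.1 q.2)) ^ 2)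
          = ∑ q : Fin p × Fin p, M q.1 q.2 ^ 2 :=
        Finset.sum_congr rfl fun q _ => by ring
      have hsumneg : (∑ q : Fin p × Fin p, -(M q.1 q.2) * U q.2 q.1)
          = -∑ q : Fin p × Fin p, M q.1 q.2 * U q.2 q.1 := by
        rw [← Finset.sum_neg_distrib]
        exact Finset.sum_congr rfl fun q _ => by ring
      rw [hsq, hsumneg] at hneg
      rw [abs_le]
      exact ⟨by linarith, hpos⟩
    rw [htr]
    refine hCS.trans ?_
    rw [hMnorm, hU]
    have hfrobU : 0 ≤ frobNorm U := Real.sqrt_nonneg _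
    have : ((p:ℝ)/n) * ‖SY ω‖ ≤ t * p := by
      calc ((p:ℝ)/n) * ‖SY ω‖ ≤ ((p:ℝ)/n) * (t * n) :=
            mul_le_mul_of_nonneg_left hωB (by positivity)
        _ = t * p := by field_simp
    exact mul_le_mul_of_nonneg_right this hfrobU
  -- final chain
  calc ENNReal.ofReal (1 - 2 * Real.exp (-((n : ℝ) * t ^ 2) / (2 * (1 + 1.7 * t))))
      ≤ ENNReal.ofReal (1 - 2 * Real.exp (-((n : ℝ) * t ^ 2) / 2)) := by
        apply ENNReal.ofReal_le_ofReal
        have hexp : Real.exp (-((n : ℝ) * t ^ 2) / 2)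
            ≤ Real.exp (-((n : ℝ) * t ^ 2) / (2 * (1 + 1.7 * t))) := by
          apply Real.exp_le_exp.2
          rw [neg_div, neg_div, neg_le_neg_iff]
          apply div_le_div_of_nonneg_left (by positivity) (by norm_num) ?_
          nlinarith
        linarith
    _ ≤ 1 - ENNReal.ofReal (2 * Real.exp (-((n : ℝ) * t ^ 2) / 2)) := by
        rw [ENNReal.ofReal_sub _ (by positivity), ENNReal.ofReal_one]
    _ ≤ 1 - μ B := tsub_le_tsub_left hμB 1
    _ = μ Bᶜ := (prob_compl_eq_one_sub hBmeas).symm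
    _ ≤ _ := measure_mono hsubset
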